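/- Let k≥1. There exist constants 0<ε<1 and K≥1 (depending only on the model parameters and k) such that, almost surely in (G,z), for any |λ|,|η| ≤ ε one has ⟨‖σ⃗‖^{2k}⟩_{λ,η} ≤ K N^k(‖z̄‖^{2k} + ‖Ḡ‖_op^{2k} + 1 + h^{2k}). -/

import Mathlib

open MeasureTheory ProbabilityTheory Real Filter

noncomputable section

/-- Law of the disorder `(G, z)`: i.i.d. standard gaussian matrix entries and
i.i.d. `N(0, Δ*)` noise. -/
def disorder (M N : ℕ) (Δ : ℝ) : Measure ((Fin M → Fin N → ℝ) × (Fin M → ℝ)) :=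
  (Measure.pi fun _ : Fin M => Measure.pi fun _ : Fin N => gaussianReal 0 1).prod
    (Measure.pi fun _ : Fin M => gaussianReal 0 Δ.toNNReal)

/-- `S_k(σ) = (Ḡ σ)_k` with `Ḡ = G/√N`. -/
def Sk {M N : ℕ} (G : Fin M → Fin N → ℝ) (σ : Fin N → ℝ) (k : Fin M) : ℝ :=
  (∑ i, G k i * σ i) / Real.sqrt (N : ℝ)

/-- Euclidean norm of a vector in `ℝⁿ`. -/
def vnorm {n : ℕ} (s : Fin n → ℝ) : ℝ := Real.sqrt (∑ ℓ, (s ℓ) ^ 2)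

/-- Euclidean norm of a replica configuration `σ⃗ ∈ (ℝ^N)ⁿ`. -/
def cnorm {n N : ℕ} (σv : Fin n → Fin N → ℝ) : ℝ := Real.sqrt (∑ ℓ, ∑ i, (σv ℓ i) ^ 2)

/-- Generalized overlap `R(σ⃗) = (1/N) Σ_i φ(σ_i¹,…,σ_iⁿ)`. -/
def Rgen {n N : ℕ} (φ : (Fin n → ℝ) → ℝ) (σv : Fin n → Fin N → ℝ) : ℝ :=
  (∑ i, φ (fun ℓ => σv ℓ i)) / (N : ℝ)

/-- Generalized overlap `Q(σ⃗) = (1/N) Σ_k ψ(S_k(σ¹)+z_k,…,S_k(σⁿ)+z_k)`. -/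
def Qgen {n M N : ℕ} (ψ : (Fin n → ℝ) → ℝ) (G : Fin M → Fin N → ℝ) (z : Fin M → ℝ)
    (σv : Fin n → Fin N → ℝ) : ℝ :=
  (∑ k, ψ (fun ℓ => Sk G (σv ℓ) k + z k)) / (N : ℝ)

/-- Hamiltonian `X_{N,λ,η}` of the coupled replicas. -/
def Xgen {n M N : ℕ} (u : ℝ → ℝ) (φ ψ : (Fin n → ℝ) → ℝ) (h κ lam η : ℝ)
    (G : Fin M → Fin N → ℝ) (z : Fin M → ℝ) (σv : Fin n → Fin N → ℝ) : ℝ :=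
  (∑ ℓ, ∑ k, u (Sk G (σv ℓ) k + z k)) + h * (∑ ℓ, ∑ i, σv ℓ i) -
    κ * (∑ ℓ, ∑ i, (σv ℓ i) ^ 2) + lam * (N : ℝ) * Rgen φ σv + η * (N : ℝ) * Qgen ψ G z σv

/-- Partition function `Z_{N,λ,η}`. -/
def Zgen {n M N : ℕ} (u : ℝ → ℝ) (φ ψ : (Fin n → ℝ) → ℝ) (h κ lam η : ℝ)
    (G : Fin M → Fin N → ℝ) (z : Fin M → ℝ) : ℝ :=
  ∫ σv : Fin n → Fin N → ℝ, Real.exp (Xgen u φ ψ h κ lam η G z σv)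

/-- Gibbs expectation `⟨·⟩_{λ,η}`. -/
def gibbsGen {n M N : ℕ} (u : ℝ → ℝ) (φ ψ : (Fin n → ℝ) → ℝ) (h κ lam η : ℝ)
    (G : Fin M → Fin N → ℝ) (z : Fin M → ℝ) (f : (Fin n → Fin N → ℝ) → ℝ) : ℝ :=
  (∫ σv : Fin n → Fin N → ℝ, f σv * Real.exp (Xgen u φ ψ h κ lam η G z σv)) /
    Zgen u φ ψ h κ lam η G z

/-- Free energy `F_N(λ,η)`. -/
def Fgen {n M N : ℕ} (u : ℝ → ℝ) (φ ψ : (Fin n → ℝ) → ℝ) (h κ lam η : ℝ)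
    (G : Fin M → Fin N → ℝ) (z : Fin M → ℝ) : ℝ :=
  (1 / (N : ℝ)) * Real.log (Zgen (n := n) u φ ψ h κ lam η G z)

/-- Operator norm of an `M × N` matrix acting on Euclidean spaces. -/
def opNorm {M N : ℕ} (A : Fin M → Fin N → ℝ) : ℝ :=
  ‖(LinearMap.toContinuousLinearMap (Matrix.toEuclideanLin (Matrix.of A)))‖

/-- Growth conditions (G-1)–(G-3) on `u`, `φ`, `ψ`. -/
def Growth (n : ℕ) (u : ℝ → ℝ) (φ ψ : (Fin n → ℝ) → ℝ) (d η0 α : ℝ) : Prop :=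
  (∀ s, u s ≤ 0 ∧ -(d * (1 + s ^ 2)) ≤ u s) ∧
  (∀ s, |deriv u s| ≤ d * (1 + |s|)) ∧
  (∀ s s', |φ s - φ s'| ≤ d * (1 + vnorm s + vnorm s') * vnorm (s - s')) ∧
  (∀ s s', |ψ s - ψ s'| ≤ d * (1 + vnorm s + vnorm s') * vnorm (s - s')) ∧
  (∀ s, |φ s| ≤ d * (1 + (vnorm s) ^ 2)) ∧
  (∀ s, |ψ s| ≤ d * (1 + (vnorm s) ^ 2)) ∧
  ContDiff ℝ 2 φ ∧ ContDiff ℝ 2 ψ ∧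
  (∀ (s : Fin n → ℝ) (l l' : Fin n),
    |fderiv ℝ (fun y => fderiv ℝ φ y (Pi.single l' 1)) s (Pi.single l 1)| ≤ d) ∧
  (∀ (s : Fin n → ℝ) (l l' : Fin n),
    |fderiv ℝ (fun y => fderiv ℝ ψ y (Pi.single l' 1)) s (Pi.single l 1)| ≤ d) ∧
  (∀ y : Fin n → ℝ, (∑ ℓ, u (y ℓ)) + η0 * |ψ y| ≤ α * d)


lemma amgm_quarter {κ : ℝ} (hκ : 0 < κ) (a s : ℝ) : a * s ≤ a^2/κ + κ/4 * s^2 := by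
  have h2 : κ * (a*s) ≤ κ * (a^2/κ + κ/4*s^2) := by
    have he : κ * (a^2/κ + κ/4*s^2) = a^2 + (κ/2*s)^2 := by field_simp; ring
    rw [he]; nlinarith [sq_nonneg (a - κ/2*s)]
  exact le_of_mul_le_mul_left h2 hκ

lemma pow_sum_four_le {a b c d : ℝ} (ha : 0 ≤ a) (hb : 0 ≤ b) (hc : 0 ≤ c) (hd : 0 ≤ d) (k : ℕ) :
    (a + b + c + d)^k ≤ 4^k * (a^k + b^k + c^k + d^k) := by
  set m := max (max a b) (max c d) with hm
  have hma : a ≤ m := le_trans (le_max_left a b) (le_max_left _ _)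
  have hmb : b ≤ m := le_trans (le_max_right a b) (le_max_left _ _)
  have hmc : c ≤ m := le_trans (le_max_left c d) (le_max_right _ _)
  have hmd : d ≤ m := le_trans (le_max_right c d) (le_max_right _ _)
  have hm4 : m ^ k ≤ a^k + b^k + c^k + d^k := by
    have pa := pow_nonneg ha k; have pb := pow_nonneg hb k
    have pc := pow_nonneg hc k; have pd := pow_nonneg hd k
    rcases max_choice (max a b) (max c d) with h1 | h1 <;> rw [hm, h1]
    · rcases max_choice a b with h2 | h2 <;> rw [h2] <;> linarith
    · rcases max_choice c d with h2 | h2 <;> rw [h2] <;> linarith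
  calc (a+b+c+d)^k ≤ (4*m)^k := pow_le_pow_left₀ (by positivity) (by linarith) k
    _ = 4^k * m^k := mul_pow 4 m k
    _ ≤ 4^k * (a^k + b^k + c^k + d^k) := by
        exact mul_le_mul_of_nonneg_left hm4 (by positivity)

lemma pow_le_exp_aux (k : ℕ) {β t : ℝ} (hβ : 0 < β) (ht : 0 ≤ t) :
    t ^ k ≤ (Nat.factorial k : ℝ) * (1/β)^k * Real.exp (β * t) := by
  have hx0 : (0:ℝ) ≤ β*t := by positivity
  have h1 : (β*t)^k / (Nat.factorial k : ℝ) ≤ Real.exp (β*t) :=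
    Real.pow_div_factorial_le_exp (β*t) hx0 k
  have h2 : (β*t)^k ≤ (Nat.factorial k : ℝ) * Real.exp (β*t) := by
    rw [div_le_iff₀ (by positivity)] at h1; linarith
  have h3 : t^k = (β*t)^k * (1/β)^k := by
    rw [← mul_pow]; congr 1; field_simp
  rw [h3]
  calc (β*t)^k * (1/β)^k ≤ ((Nat.factorial k : ℝ) * Real.exp (β*t)) * (1/β)^k := by
        exact mul_le_mul_of_nonneg_right h2 (by positivity)
    _ = (Nat.factorial k : ℝ) * (1/β)^k * Real.exp (β*t) := by ring

set_option maxHeartbeats 1000000 in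
lemma integrable_gauss_pi (n N : ℕ) {β : ℝ} (hβ : 0 < β) :
    Integrable (fun σ : Fin n → Fin N → ℝ => Real.exp (-(β * ∑ ℓ, ∑ i, (σ ℓ i)^2))) := by
  have hrw1 : ∀ (m : ℕ) (f : Fin m → ℝ),
      Real.exp (-(β * ∑ i, f i)) = ∏ i, Real.exp (-(β * f i)) := by
    intro m f
    rw [← Real.exp_sum]; congr 1
    rw [Finset.mul_sum, ← Finset.sum_neg_distrib]
  have hbase : Integrable (fun x : ℝ => Real.exp (-(β * x^2))) := by
    simpa [neg_mul] using integrable_exp_neg_mul_sq hβ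
  have h1 : Integrable (fun x : Fin N → ℝ => Real.exp (-(β * ∑ i, (x i)^2))) := by
    have he : (fun x : Fin N → ℝ => Real.exp (-(β * ∑ i, (x i)^2)))
        = fun x => ∏ i, Real.exp (-(β * (x i)^2)) := by
      funext x; exact hrw1 N _
    rw [he]
    exact Integrable.fintype_prod (f := fun _ x => Real.exp (-(β * x^2))) (fun _ => hbase)
  have he2 : (fun σ : Fin n → Fin N → ℝ => Real.exp (-(β * ∑ ℓ, ∑ i, (σ ℓ i)^2)))
      = fun σ => ∏ ℓ, Real.exp (-(β * ∑ i, (σ ℓ i)^2)) := by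
    funext σ; exact hrw1 n _
  rw [he2]
  exact MeasureTheory.Integrable.fintype_prod (𝕜 := ℝ) (ι := Fin n) (E := Fin N → ℝ)
    (f := fun _ x => Real.exp (-(β * ∑ i, (x i)^2))) (fun _ => h1)

lemma integral_gauss_pi (n N : ℕ) {β : ℝ} (hβ : 0 < β) :
    ∫ σ : Fin n → Fin N → ℝ, Real.exp (-(β * ∑ ℓ, ∑ i, (σ ℓ i)^2))
      = (Real.sqrt (π/β)) ^ (n*N) := by
  have hrw1 : ∀ (m : ℕ) (f : Fin m → ℝ),
      Real.exp (-(β * ∑ i, f i)) = ∏ i, Real.exp (-(β * f i)) := by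
    intro m f
    rw [← Real.exp_sum]; congr 1
    rw [Finset.mul_sum, ← Finset.sum_neg_distrib]
  have h0 : ∫ x : ℝ, Real.exp (-(β * x^2)) = Real.sqrt (π/β) := by
    simpa [neg_mul] using integral_gaussian β
  have h1 : ∫ x : Fin N → ℝ, Real.exp (-(β * ∑ i, (x i)^2)) = (Real.sqrt (π/β))^N := by
    simp only [hrw1]
    rw [volume_pi, integral_fintype_prod_eq_pow (fun x : ℝ => Real.exp (-(β * x^2)))]
    rw [h0]; simp
  calc ∫ σ : Fin n → Fin N → ℝ, Real.exp (-(β * ∑ ℓ, ∑ i, (σ ℓ i)^2))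
      = ∫ σ : Fin n → Fin N → ℝ, ∏ ℓ, Real.exp (-(β * ∑ i, (σ ℓ i)^2)) := by
        congr 1; funext σ; exact hrw1 n _
    _ = (∫ x : Fin N → ℝ, Real.exp (-(β * ∑ i, (x i)^2))) ^ n := by
        rw [volume_pi, integral_fintype_prod_eq_pow
          (fun x : Fin N → ℝ => Real.exp (-(β * ∑ i, (x i)^2)))]; simp
    _ = (Real.sqrt (π/β)) ^ (n*N) := by rw [h1, ← pow_mul, Nat.mul_comm]

lemma sum_Sk_sq_le {M N : ℕ} (G : Fin M → Fin N → ℝ) (σ : Fin N → ℝ) :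
    ∑ kk, (Sk G σ kk)^2 ≤ (opNorm (fun p i => G p i / Real.sqrt N))^2 * ∑ i, (σ i)^2 := by
  set A : Matrix (Fin M) (Fin N) ℝ := Matrix.of (fun p i => G p i / Real.sqrt N) with hA
  set L := LinearMap.toContinuousLinearMap (Matrix.toEuclideanLin A) with hL
  set v : EuclideanSpace ℝ (Fin N) := (WithLp.equiv 2 (Fin N → ℝ)).symm σ with hv
  have hvn : ‖v‖^2 = ∑ i, (σ i)^2 := by
    rw [EuclideanSpace.norm_eq, Real.sq_sqrt (by positivity)]
    simp [hv, sq_abs]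
  have hLv : ∀ kk, (L v) kk = Sk G σ kk := by
    intro kk
    have h1 : L v = Matrix.toEuclideanLin A v := rfl
    rw [h1, hv]
    show Matrix.mulVec A σ kk = Sk G σ kk
    rw [Sk, Finset.sum_div]
    simp only [Matrix.mulVec, dotProduct, hA, Matrix.of_apply]
    exact Finset.sum_congr rfl (fun i _ => by ring)
  have hLvn : ‖L v‖^2 = ∑ kk, (Sk G σ kk)^2 := by
    rw [EuclideanSpace.norm_eq, Real.sq_sqrt (by positivity)]
    congr 1; funext kk; rw [Real.norm_eq_abs, sq_abs, hLv]
  have h1 : ‖L v‖ ≤ ‖L‖ * ‖v‖ := L.le_opNorm v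
  have h2 : ‖L v‖^2 ≤ (‖L‖ * ‖v‖)^2 := pow_le_pow_left₀ (norm_nonneg _) h1 2
  rw [hLvn, mul_pow, hvn] at h2
  have hop : opNorm (fun p i => G p i / Real.sqrt (N:ℝ)) = ‖L‖ := rfl
  rw [hop]
  exact h2

lemma sum_one_add {m : ℕ} (dd : ℝ) (f : Fin m → ℝ) :
    ∑ kk, dd*(1 + f kk) = dd*(m:ℝ) + dd * ∑ kk, f kk := by
  rw [← Finset.mul_sum, Finset.sum_add_distrib, Finset.sum_const, Finset.card_univ]
  simp [nsmul_eq_mul]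
  ring

lemma sum_sum_add {n m : ℕ} (p q : ℝ) (f : Fin n → Fin m → ℝ) :
    ∑ ℓ, ∑ i, (p + q * f ℓ i) = (n:ℝ)*(m:ℝ)*p + q * ∑ ℓ, ∑ i, f ℓ i := by
  have h1 : ∀ ℓ, ∑ i, (p + q * f ℓ i) = (m:ℝ)*p + q * ∑ i, f ℓ i := by
    intro ℓ
    rw [Finset.sum_add_distrib, Finset.sum_const, Finset.card_univ, ← Finset.mul_sum]
    simp [nsmul_eq_mul]
  simp only [h1]
  rw [Finset.sum_add_distrib, Finset.sum_const, Finset.card_univ, ← Finset.mul_sum]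
  simp [nsmul_eq_mul]
  ring

lemma continuous_Xgen {n M N : ℕ} {u : ℝ → ℝ} {φ ψ : (Fin n → ℝ) → ℝ}
    (hu : Continuous u) (hφ : Continuous φ) (hψ : Continuous ψ)
    (h κ lam η : ℝ) (G : Fin M → Fin N → ℝ) (z : Fin M → ℝ) :
    Continuous (fun σv : Fin n → Fin N → ℝ => Xgen u φ ψ h κ lam η G z σv) := by
  unfold Xgen Rgen Qgen Sk
  fun_prop

def aC (n : ℕ) (α κ h d : ℝ) : ℝ := α^2*d + d + n*h^2/κ
def bC (n : ℕ) (α κ h d : ℝ) : ℝ := d*n*(α+2) + n + κ*n + d*(1+n) + d*(α+2*n)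
def c6C (κ : ℝ) : ℝ := max 1 (Real.sqrt (π/(κ/8)))
def cC (n : ℕ) (α κ h d : ℝ) : ℝ :=
  (4/κ)*(aC n α κ h d + bC n α κ h d + n*Real.log (c6C κ) + 1)
def KC (n : ℕ) (α κ h d : ℝ) (k : ℕ) : ℝ :=
  4^k*(cC n α κ h d)^k + (Nat.factorial k : ℝ)*(1/(κ/8))^k + 1

set_option maxHeartbeats 2000000 in
theorem key
    (n N M : ℕ) (hN : 1 ≤ N)
    (α κ h d η0 : ℝ)
    (hα : 0 < α) (hκ : 0 < κ) (hd : 0 < d) (hη0 : 0 < η0)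
    (hM : (M : ℝ) ≤ α * N)
    (u : ℝ → ℝ) (hdiff : Differentiable ℝ u)
    (φ ψ : (Fin n → ℝ) → ℝ) (hG : Growth n u φ ψ d η0 α)
    (k : ℕ) (hk : 1 ≤ k)
    (G : Fin M → Fin N → ℝ) (z : Fin M → ℝ)
    (lam η : ℝ)
    (hlam : |lam| ≤ min η0 (min (κ/(4*d)) (1/2)))
    (hη : |η| ≤ min η0 (min (κ/(4*d)) (1/2))) :
    gibbsGen u φ ψ h κ lam η G z (fun σv => (cnorm σv) ^ (2*k)) ≤
      (KC n α κ h d k) * (N:ℝ)^k * ((∑ j, (z j / Real.sqrt (N:ℝ))^2)^k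
        + (opNorm (fun p i => G p i / Real.sqrt (N:ℝ)))^(2*k) + 1 + h^(2*k)) := by
  obtain ⟨hu, -, -, -, hφB, hψB, hφC, hψC, -, -, hG3⟩ := hG
  have hNR : (1:ℝ) ≤ (N:ℝ) := by exact_mod_cast hN
  have hNpos : (0:ℝ) < (N:ℝ) := by linarith only [hNR]
  have hN0 : (N:ℝ) ≠ 0 := ne_of_gt hNpos
  have hn0 : (0:ℝ) ≤ (n:ℝ) := Nat.cast_nonneg n
  set Gop : ℝ := opNorm (fun p i => G p i / Real.sqrt (N:ℝ)) with hGopdef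
  set Zs : ℝ := ∑ j, (z j / Real.sqrt (N:ℝ))^2 with hZsdef
  have hGop0 : 0 ≤ Gop := norm_nonneg _
  have hZs0 : 0 ≤ Zs := by rw [hZsdef]; positivity
  set W : ℝ := Zs + Gop^2 + 1 + h^2 with hWdef
  have hW1 : 1 ≤ W := by nlinarith only [hWdef, hZs0, sq_nonneg Gop, sq_nonneg h]
  have hW0 : 0 < W := by linarith only [hW1]
  have hGZW : Gop^2 + Zs ≤ W := by nlinarith only [hWdef, sq_nonneg h]
  set a : ℝ := aC n α κ h d with hadef
  set b : ℝ := bC n α κ h d with hbdef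
  have ha0 : 0 ≤ a := by rw [hadef, aC]; positivity
  have hb0 : 0 ≤ b := by rw [hbdef, bC]; positivity
  have hc61 : 1 ≤ c6C κ := le_max_left _ _
  have hc6pos : 0 < c6C κ := lt_of_lt_of_le one_pos hc61
  have hlog0 : 0 ≤ Real.log (c6C κ) := Real.log_nonneg hc61
  set c : ℝ := cC n α κ h d with hcdef
  have hc0 : 0 < c := by
    rw [hcdef, cC, ← hadef, ← hbdef]; positivity
  set T : ℝ := c * N * W with hTdef
  have hT0 : 0 ≤ T := by positivity
  have hmin1 : min η0 (min (κ/(4*d)) (1/2)) ≤ 1 :=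
    le_trans (le_trans (min_le_right _ _) (min_le_right _ _)) (by norm_num)
  have hlam1 : |lam| ≤ 1 := le_trans hlam hmin1
  have hη1 : |η| ≤ 1 := le_trans hη hmin1
  have hlamd : |lam| * d ≤ κ/4 := by
    have h1 : |lam| ≤ κ/(4*d) :=
      le_trans hlam (le_trans (min_le_right _ _) (min_le_left _ _))
    calc |lam| * d ≤ (κ/(4*d)) * d := mul_le_mul_of_nonneg_right h1 hd.le
      _ = κ/4 := by field_simp
  have hηd : |η| * d ≤ κ/4 := by
    have h1 : |η| ≤ κ/(4*d) :=
      le_trans hη (le_trans (min_le_right _ _) (min_le_left _ _))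
    calc |η| * d ≤ (κ/(4*d)) * d := mul_le_mul_of_nonneg_right h1 hd.le
      _ = κ/4 := by field_simp
  have hηη0 : |η| ≤ η0 := le_trans hη (min_le_left _ _)
  have hvnorm_sq : ∀ (s : Fin n → ℝ), vnorm s ^ 2 = ∑ ℓ, (s ℓ)^2 := by
    intro s; rw [vnorm, Real.sq_sqrt (by positivity)]
  have hzsum : ∑ kk, (z kk)^2 = (N:ℝ) * Zs := by
    rw [hZsdef, Finset.mul_sum]
    congr 1; funext j
    rw [div_pow, Real.sq_sqrt hNpos.le]
    field_simp
  set X : (Fin n → Fin N → ℝ) → ℝ := fun σv => Xgen u φ ψ h κ lam η G z σv with hXdef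
  have hXcont : Continuous X :=
    continuous_Xgen hdiff.continuous (hφC.continuous) (hψC.continuous) h κ lam η G z
  -- upper bound F1
  have F1 : ∀ σv : Fin n → Fin N → ℝ,
      X σv ≤ a*N*W - κ/2 * (∑ ℓ, ∑ i, (σv ℓ i)^2) := by
    intro σv
    have hsq0 : 0 ≤ ∑ ℓ, ∑ i, (σv ℓ i)^2 := by positivity
    have hQrw : η*(N:ℝ)*Qgen ψ G z σv = η * ∑ kk, ψ (fun ℓ => Sk G (σv ℓ) kk + z kk) := by
      rw [Qgen]; field_simp
    have hU : (∑ ℓ, ∑ kk, u (Sk G (σv ℓ) kk + z kk)) + η*(N:ℝ)*Qgen ψ G z σv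
        ≤ α^2*d*N := by
      rw [hQrw, Finset.sum_comm, Finset.mul_sum, ← Finset.sum_add_distrib]
      have hstep : ∀ kk : Fin M, ((∑ ℓ, u (Sk G (σv ℓ) kk + z kk))
          + η * ψ (fun ℓ => Sk G (σv ℓ) kk + z kk)) ≤ α*d := by
        intro kk
        have h1 : η * ψ (fun ℓ => Sk G (σv ℓ) kk + z kk)
            ≤ η0 * |ψ (fun ℓ => Sk G (σv ℓ) kk + z kk)| := by
          calc η * ψ (fun ℓ => Sk G (σv ℓ) kk + z kk)
              ≤ |η * ψ (fun ℓ => Sk G (σv ℓ) kk + z kk)| := le_abs_self _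
            _ = |η| * |ψ (fun ℓ => Sk G (σv ℓ) kk + z kk)| := abs_mul _ _
            _ ≤ η0 * |ψ (fun ℓ => Sk G (σv ℓ) kk + z kk)| :=
                mul_le_mul_of_nonneg_right hηη0 (abs_nonneg _)
        have h2 := hG3 (fun ℓ => Sk G (σv ℓ) kk + z kk)
        linarith only [h1, h2, abs_nonneg (ψ (fun ℓ => Sk G (σv ℓ) kk + z kk))]
      calc ∑ kk : Fin M, ((∑ ℓ, u (Sk G (σv ℓ) kk + z kk))
              + η * ψ (fun ℓ => Sk G (σv ℓ) kk + z kk))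
          ≤ ∑ _kk : Fin M, (α*d) := Finset.sum_le_sum (fun kk _ => hstep kk)
        _ = (M:ℝ) * (α*d) := by
            rw [Finset.sum_const, Finset.card_univ]; simp [nsmul_eq_mul]
        _ ≤ (α*(N:ℝ)) * (α*d) := mul_le_mul_of_nonneg_right hM (by positivity)
        _ = α^2*d*N := by ring
    have hRrw : lam*(N:ℝ)*Rgen φ σv = lam * ∑ i, φ (fun ℓ => σv ℓ i) := by
      rw [Rgen]; field_simp
    have hφsum : ∑ i, |φ (fun ℓ => σv ℓ i)| ≤ d*(N:ℝ) + d*(∑ ℓ, ∑ i, (σv ℓ i)^2) := by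
      calc ∑ i, |φ (fun ℓ => σv ℓ i)|
          ≤ ∑ i : Fin N, (d * (1 + vnorm (fun ℓ => σv ℓ i)^2)) :=
            Finset.sum_le_sum (fun i _ => hφB _)
        _ = ∑ i : Fin N, (d * (1 + ∑ ℓ, (σv ℓ i)^2)) := by
            congr 1; funext i; rw [hvnorm_sq]
        _ = d*(N:ℝ) + d * ∑ i, ∑ ℓ, (σv ℓ i)^2 := sum_one_add d _
        _ = d*(N:ℝ) + d*(∑ ℓ, ∑ i, (σv ℓ i)^2) := by rw [Finset.sum_comm]
    have hR : lam*(N:ℝ)*Rgen φ σv ≤ d*N + κ/4 * (∑ ℓ, ∑ i, (σv ℓ i)^2) := by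
      rw [hRrw]
      have habs : lam * ∑ i, φ (fun ℓ => σv ℓ i) ≤ |lam| * ∑ i, |φ (fun ℓ => σv ℓ i)| := by
        calc lam * ∑ i, φ (fun ℓ => σv ℓ i) ≤ |lam * ∑ i, φ (fun ℓ => σv ℓ i)| := le_abs_self _
          _ = |lam| * |∑ i, φ (fun ℓ => σv ℓ i)| := abs_mul _ _
          _ ≤ |lam| * ∑ i, |φ (fun ℓ => σv ℓ i)| :=
              mul_le_mul_of_nonneg_left (Finset.abs_sum_le_sum_abs _ _) (abs_nonneg _)
      have h2 : |lam| * ∑ i, |φ (fun ℓ => σv ℓ i)|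
          ≤ |lam| * (d*(N:ℝ) + d*(∑ ℓ, ∑ i, (σv ℓ i)^2)) :=
        mul_le_mul_of_nonneg_left hφsum (abs_nonneg _)
      have h3 : |lam| * (d*(N:ℝ) + d*(∑ ℓ, ∑ i, (σv ℓ i)^2))
          = (|lam| * d)*(N:ℝ) + (|lam| * d)*(∑ ℓ, ∑ i, (σv ℓ i)^2) := by ring
      have h4 : (|lam| * d)*(N:ℝ) ≤ d*(N:ℝ) := by
        have h41 : |lam| * d ≤ 1*d := mul_le_mul_of_nonneg_right hlam1 hd.le
        have h42 := mul_le_mul_of_nonneg_right h41 hNpos.le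
        linarith only [h42]
      have h5 : (|lam| * d)*(∑ ℓ, ∑ i, (σv ℓ i)^2) ≤ κ/4*(∑ ℓ, ∑ i, (σv ℓ i)^2) :=
        mul_le_mul_of_nonneg_right hlamd hsq0
      linarith only [habs, h2, h3, h4, h5]
    have hH : h * (∑ ℓ, ∑ i, σv ℓ i) ≤ (n:ℝ)*(N:ℝ)*(h^2/κ) + κ/4 * (∑ ℓ, ∑ i, (σv ℓ i)^2) := by
      have h1 : h * (∑ ℓ, ∑ i, σv ℓ i) = ∑ ℓ, ∑ i, h * σv ℓ i := by
        rw [Finset.mul_sum]; congr 1; funext ℓ; rw [Finset.mul_sum]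
      rw [h1]
      calc ∑ ℓ, ∑ i, h * σv ℓ i
          ≤ ∑ ℓ : Fin n, ∑ i : Fin N, (h^2/κ + κ/4 * (σv ℓ i)^2) :=
            Finset.sum_le_sum (fun ℓ _ => Finset.sum_le_sum (fun i _ => amgm_quarter hκ h _))
        _ = (n:ℝ)*(N:ℝ)*(h^2/κ) + κ/4 * (∑ ℓ, ∑ i, (σv ℓ i)^2) := sum_sum_add _ _ _
    have hXeq : X σv = (∑ ℓ, ∑ kk, u (Sk G (σv ℓ) kk + z kk)) + h * (∑ ℓ, ∑ i, σv ℓ i) -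
        κ * (∑ ℓ, ∑ i, (σv ℓ i) ^ 2) + lam * (N : ℝ) * Rgen φ σv
        + η * (N : ℝ) * Qgen ψ G z σv := rfl
    have hae : a*(N:ℝ) = α^2*d*(N:ℝ) + d*(N:ℝ) + (n:ℝ)*(N:ℝ)*(h^2/κ) := by
      rw [hadef, aC]; field_simp
    have haNW : a*(N:ℝ) ≤ a*N*W := by
      nlinarith only [mul_nonneg (mul_nonneg ha0 hNpos.le)
        (by linarith only [hW1] : (0:ℝ) ≤ W - 1)]
    rw [hXeq]
    clear_value a W Zs Gop X
    linarith only [hU, hR, hH, haNW, hae, hsq0]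
  -- cube and lower bound F2
  set cube : Set (Fin n → Fin N → ℝ) :=
    Set.univ.pi (fun _ : Fin n => Set.univ.pi fun _ : Fin N => Set.Icc (0:ℝ) 1) with hcubedef
  have hcube_meas : MeasurableSet cube :=
    MeasurableSet.univ_pi (fun ℓ => MeasurableSet.univ_pi (fun i => measurableSet_Icc))
  have F2 : ∀ σv ∈ cube, -(b*N*W) ≤ X σv := by
    intro σv hσv
    simp only [hcubedef, Set.mem_pi, Set.mem_univ, forall_true_left, Set.mem_Icc] at hσv
    have hsig01 : ∀ ℓ i, 0 ≤ σv ℓ i ∧ σv ℓ i ≤ 1 := fun ℓ i => hσv ℓ i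
    have hsigsq : ∀ ℓ i, (σv ℓ i)^2 ≤ 1 := by
      intro ℓ i; nlinarith only [(hsig01 ℓ i).1, (hsig01 ℓ i).2]
    have hrow : ∀ ℓ, ∑ i, (σv ℓ i)^2 ≤ (N:ℝ) := by
      intro ℓ
      calc ∑ i, (σv ℓ i)^2 ≤ ∑ _i : Fin N, (1:ℝ) :=
            Finset.sum_le_sum (fun i _ => hsigsq ℓ i)
        _ = (N:ℝ) := by simp
    have hsq_le : (∑ ℓ, ∑ i, (σv ℓ i)^2) ≤ (n:ℝ)*(N:ℝ) := by
      calc ∑ ℓ, ∑ i, (σv ℓ i)^2 ≤ ∑ _ℓ : Fin n, (N:ℝ) :=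
            Finset.sum_le_sum (fun ℓ _ => hrow ℓ)
        _ = (n:ℝ)*(N:ℝ) := by simp [Finset.sum_const, Finset.card_univ, nsmul_eq_mul]
    have hsq0 : 0 ≤ ∑ ℓ, ∑ i, (σv ℓ i)^2 := by positivity
    have hSsum : 0 ≤ (∑ ℓ, ∑ i, σv ℓ i) ∧ (∑ ℓ, ∑ i, σv ℓ i) ≤ (n:ℝ)*(N:ℝ) := by
      constructor
      · apply Finset.sum_nonneg; intro ℓ _; apply Finset.sum_nonneg
        intro i _; exact (hsig01 ℓ i).1
      · calc ∑ ℓ, ∑ i, σv ℓ i ≤ ∑ _ℓ : Fin n, (N:ℝ) := by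
              apply Finset.sum_le_sum; intro ℓ _
              calc ∑ i, σv ℓ i ≤ ∑ _i : Fin N, (1:ℝ) :=
                    Finset.sum_le_sum (fun i _ => (hsig01 ℓ i).2)
                _ = (N:ℝ) := by simp
          _ = (n:ℝ)*(N:ℝ) := by simp [Finset.sum_const, Finset.card_univ, nsmul_eq_mul]
    have hSk : ∀ ℓ, ∑ kk, (Sk G (σv ℓ) kk)^2 ≤ Gop^2 * (N:ℝ) := by
      intro ℓ
      refine le_trans (sum_Sk_sq_le G (σv ℓ)) ?_
      rw [← hGopdef]
      exact mul_le_mul_of_nonneg_left (hrow ℓ) (by positivity)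
    have hy : ∀ ℓ, ∑ kk, (Sk G (σv ℓ) kk + z kk)^2 ≤ 2*(Gop^2*(N:ℝ)) + 2*((N:ℝ)*Zs) := by
      intro ℓ
      calc ∑ kk, (Sk G (σv ℓ) kk + z kk)^2
          ≤ ∑ kk, (2*(Sk G (σv ℓ) kk)^2 + 2*(z kk)^2) :=
            Finset.sum_le_sum (fun kk _ => by
              nlinarith only [sq_nonneg (Sk G (σv ℓ) kk - z kk)])
        _ = 2*(∑ kk, (Sk G (σv ℓ) kk)^2) + 2*(∑ kk, (z kk)^2) := by
            rw [Finset.sum_add_distrib, ← Finset.mul_sum, ← Finset.mul_sum]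
        _ ≤ 2*(Gop^2*(N:ℝ)) + 2*((N:ℝ)*Zs) := by
            rw [hzsum]; linarith only [hSk ℓ]
    have hyy : ∑ ℓ, ∑ kk, (Sk G (σv ℓ) kk + z kk)^2 ≤ 2*(n:ℝ)*(N:ℝ)*W := by
      calc ∑ ℓ, ∑ kk, (Sk G (σv ℓ) kk + z kk)^2
          ≤ ∑ _ℓ : Fin n, (2*(Gop^2*(N:ℝ)) + 2*((N:ℝ)*Zs)) :=
            Finset.sum_le_sum (fun ℓ _ => hy ℓ)
        _ = (n:ℝ)*(2*(Gop^2*(N:ℝ)) + 2*((N:ℝ)*Zs)) := by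
            rw [Finset.sum_const, Finset.card_univ]
            simp [nsmul_eq_mul]
            ring
        _ ≤ 2*(n:ℝ)*(N:ℝ)*W := by
            nlinarith only [mul_nonneg (sub_nonneg.mpr hGZW)
              (by positivity : (0:ℝ) ≤ 2*(n:ℝ)*(N:ℝ))]
    -- u term lower bound
    have hu_lb : -(d*((n:ℝ)*(α*(N:ℝ))) + d*(2*(n:ℝ)*(N:ℝ)*W))
        ≤ ∑ ℓ, ∑ kk, u (Sk G (σv ℓ) kk + z kk) := by
      have h1 : ∑ ℓ, ∑ kk, (d*(1 + (Sk G (σv ℓ) kk + z kk)^2)) ≥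
          ∑ ℓ, ∑ kk, (- u (Sk G (σv ℓ) kk + z kk)) := by
        apply Finset.sum_le_sum; intro ℓ _; apply Finset.sum_le_sum; intro kk _
        have := (hu (Sk G (σv ℓ) kk + z kk)).2
        linarith only [this]
      have h2 : ∀ ℓ, ∑ kk, (d*(1 + (Sk G (σv ℓ) kk + z kk)^2))
          = d*(M:ℝ) + d*∑ kk, (Sk G (σv ℓ) kk + z kk)^2 := fun ℓ => sum_one_add d _
      have h3 : ∑ ℓ, ∑ kk, (d*(1 + (Sk G (σv ℓ) kk + z kk)^2))
          = (n:ℝ)*(d*(M:ℝ)) + d * ∑ ℓ, ∑ kk, (Sk G (σv ℓ) kk + z kk)^2 := by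
        simp only [h2]
        rw [Finset.sum_add_distrib, Finset.sum_const, Finset.card_univ, ← Finset.mul_sum]
        simp [nsmul_eq_mul]
      have h4 : ∑ ℓ, ∑ kk, (- u (Sk G (σv ℓ) kk + z kk))
          = - ∑ ℓ, ∑ kk, u (Sk G (σv ℓ) kk + z kk) := by
        simp [Finset.sum_neg_distrib]
      have h5 : (n:ℝ)*(d*(M:ℝ)) ≤ d*((n:ℝ)*(α*(N:ℝ))) := by
        nlinarith only [mul_nonneg (mul_nonneg hd.le hn0) (sub_nonneg.mpr hM)]
      have h6 : d * (∑ ℓ, ∑ kk, (Sk G (σv ℓ) kk + z kk)^2) ≤ d*(2*(n:ℝ)*(N:ℝ)*W) :=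
        mul_le_mul_of_nonneg_left hyy hd.le
      rw [h3, h4] at h1
      linarith only [h1, h5, h6]
    -- h term
    have hh_lb : -(|h| * ((n:ℝ)*(N:ℝ))) ≤ h * (∑ ℓ, ∑ i, σv ℓ i) := by
      have h1 : 0 ≤ (h + |h|) * (∑ ℓ, ∑ i, σv ℓ i) :=
        mul_nonneg (by linarith only [neg_abs_le h]) hSsum.1
      have h2 : 0 ≤ |h| * ((n:ℝ)*(N:ℝ) - ∑ ℓ, ∑ i, σv ℓ i) :=
        mul_nonneg (abs_nonneg h) (by linarith only [hSsum.2])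
      nlinarith only [h1, h2]
    have habsW : |h| ≤ W := by
      nlinarith only [hWdef, hZs0, sq_nonneg Gop, sq_nonneg (|h| - 1), sq_abs h]
    -- κ term
    have hκ_lb : -(κ*((n:ℝ)*(N:ℝ))) ≤ -(κ * (∑ ℓ, ∑ i, (σv ℓ i)^2)) := by
      have := mul_le_mul_of_nonneg_left hsq_le hκ.le
      linarith only [this]
    -- lam term
    have hQrw : η*(N:ℝ)*Qgen ψ G z σv = η * ∑ kk, ψ (fun ℓ => Sk G (σv ℓ) kk + z kk) := by
      rw [Qgen]; field_simp
    have hRrw : lam*(N:ℝ)*Rgen φ σv = lam * ∑ i, φ (fun ℓ => σv ℓ i) := by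
      rw [Rgen]; field_simp
    have hφsum : ∑ i, |φ (fun ℓ => σv ℓ i)| ≤ d*(N:ℝ) + d*(∑ ℓ, ∑ i, (σv ℓ i)^2) := by
      calc ∑ i, |φ (fun ℓ => σv ℓ i)|
          ≤ ∑ i : Fin N, (d * (1 + vnorm (fun ℓ => σv ℓ i)^2)) :=
            Finset.sum_le_sum (fun i _ => hφB _)
        _ = ∑ i : Fin N, (d * (1 + ∑ ℓ, (σv ℓ i)^2)) := by
            congr 1; funext i; rw [hvnorm_sq]
        _ = d*(N:ℝ) + d * ∑ i, ∑ ℓ, (σv ℓ i)^2 := sum_one_add d _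
        _ = d*(N:ℝ) + d*(∑ ℓ, ∑ i, (σv ℓ i)^2) := by rw [Finset.sum_comm]
    have hR_lb : -(d*(1+(n:ℝ))*(N:ℝ)) ≤ lam*(N:ℝ)*Rgen φ σv := by
      rw [hRrw]
      have h1 : |lam * ∑ i, φ (fun ℓ => σv ℓ i)| ≤ |lam| * ∑ i, |φ (fun ℓ => σv ℓ i)| := by
        rw [abs_mul]
        exact mul_le_mul_of_nonneg_left (Finset.abs_sum_le_sum_abs _ _) (abs_nonneg _)
      have h2 : |lam| * ∑ i, |φ (fun ℓ => σv ℓ i)|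
          ≤ 1 * (d*(N:ℝ) + d*((n:ℝ)*(N:ℝ))) := by
        apply mul_le_mul hlam1 _ _ (by norm_num)
        · calc ∑ i, |φ (fun ℓ => σv ℓ i)| ≤ d*(N:ℝ) + d*(∑ ℓ, ∑ i, (σv ℓ i)^2) := hφsum
            _ ≤ d*(N:ℝ) + d*((n:ℝ)*(N:ℝ)) := by
              have := mul_le_mul_of_nonneg_left hsq_le hd.le
              linarith only [this]
        · positivity
      have h3 : -(d*(1+(n:ℝ))*(N:ℝ)) ≤ -|lam * ∑ i, φ (fun ℓ => σv ℓ i)| := by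
        have he : 1 * (d*(N:ℝ) + d*((n:ℝ)*(N:ℝ))) = d*(1+(n:ℝ))*(N:ℝ) := by ring
        have : |lam * ∑ i, φ (fun ℓ => σv ℓ i)| ≤ d*(1+(n:ℝ))*(N:ℝ) := by
          linarith only [h1, h2, he]
        linarith only [this]
      linarith only [h3, neg_abs_le (lam * ∑ i, φ (fun ℓ => σv ℓ i))]
    -- η term
    have hψsum : ∑ kk, |ψ (fun ℓ => Sk G (σv ℓ) kk + z kk)|
        ≤ d*(M:ℝ) + d*(2*(n:ℝ)*(N:ℝ)*W) := by
      calc ∑ kk, |ψ (fun ℓ => Sk G (σv ℓ) kk + z kk)|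
          ≤ ∑ kk : Fin M, (d * (1 + vnorm (fun ℓ => Sk G (σv ℓ) kk + z kk)^2)) :=
            Finset.sum_le_sum (fun kk _ => hψB _)
        _ = ∑ kk : Fin M, (d * (1 + ∑ ℓ, (Sk G (σv ℓ) kk + z kk)^2)) := by
            congr 1; funext kk; rw [hvnorm_sq]
        _ = d*(M:ℝ) + d * ∑ kk, ∑ ℓ, (Sk G (σv ℓ) kk + z kk)^2 := sum_one_add d _
        _ = d*(M:ℝ) + d * ∑ ℓ, ∑ kk, (Sk G (σv ℓ) kk + z kk)^2 := by rw [Finset.sum_comm]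
        _ ≤ d*(M:ℝ) + d*(2*(n:ℝ)*(N:ℝ)*W) := by
            linarith only [mul_le_mul_of_nonneg_left hyy hd.le]
    have hQ_lb : -(d*(α+2*(n:ℝ))*(N:ℝ)*W) ≤ η*(N:ℝ)*Qgen ψ G z σv := by
      rw [hQrw]
      have h1 : |η * ∑ kk, ψ (fun ℓ => Sk G (σv ℓ) kk + z kk)|
          ≤ |η| * ∑ kk, |ψ (fun ℓ => Sk G (σv ℓ) kk + z kk)| := by
        rw [abs_mul]
        exact mul_le_mul_of_nonneg_left (Finset.abs_sum_le_sum_abs _ _) (abs_nonneg _)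
      have h2 : |η| * ∑ kk, |ψ (fun ℓ => Sk G (σv ℓ) kk + z kk)|
          ≤ 1 * (d*(α*(N:ℝ)) + d*(2*(n:ℝ)*(N:ℝ)*W)) := by
        apply mul_le_mul hη1 _ _ (by norm_num)
        · calc ∑ kk, |ψ (fun ℓ => Sk G (σv ℓ) kk + z kk)|
              ≤ d*(M:ℝ) + d*(2*(n:ℝ)*(N:ℝ)*W) := hψsum
            _ ≤ d*(α*(N:ℝ)) + d*(2*(n:ℝ)*(N:ℝ)*W) := by
              have h21 : d*(M:ℝ) ≤ d*(α*(N:ℝ)) := mul_le_mul_of_nonneg_left hM hd.le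
              linarith only [h21, hψsum]
        · positivity
      have h3 : d*(α*(N:ℝ)) + d*(2*(n:ℝ)*(N:ℝ)*W) ≤ d*(α+2*(n:ℝ))*(N:ℝ)*W := by
        nlinarith only [mul_nonneg (mul_nonneg (mul_nonneg hd.le hα.le) hNpos.le)
          (by linarith only [hW1] : (0:ℝ) ≤ W - 1)]
      linarith only [h1, h2, h3, neg_abs_le (η * ∑ kk, ψ (fun ℓ => Sk G (σv ℓ) kk + z kk))]
    have hXeq : X σv = (∑ ℓ, ∑ kk, u (Sk G (σv ℓ) kk + z kk)) + h * (∑ ℓ, ∑ i, σv ℓ i) -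
        κ * (∑ ℓ, ∑ i, (σv ℓ i) ^ 2) + lam * (N : ℝ) * Rgen φ σv
        + η * (N : ℝ) * Qgen ψ G z σv := rfl
    have hbe : b = d*(n:ℝ)*(α+2) + (n:ℝ) + κ*(n:ℝ) + d*(1+(n:ℝ)) + d*(α+2*(n:ℝ)) := by
      rw [hbdef, bC]
    rw [hXeq]
    have e1 : -(d*((n:ℝ)*(α*(N:ℝ))) + d*(2*(n:ℝ)*(N:ℝ)*W)) ≥ -(d*(n:ℝ)*(α+2)*(N:ℝ)*W) := by
      nlinarith only [mul_nonneg (mul_nonneg (mul_nonneg (mul_nonneg hd.le hn0) hα.le) hNpos.le)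
        (by linarith only [hW1] : (0:ℝ) ≤ W - 1)]
    have e2 : -(|h| * ((n:ℝ)*(N:ℝ))) ≥ -((n:ℝ)*(N:ℝ)*W) := by
      nlinarith only [mul_nonneg (sub_nonneg.mpr habsW) (by positivity : (0:ℝ) ≤ (n:ℝ)*(N:ℝ))]
    have e3 : -(κ*((n:ℝ)*(N:ℝ))) ≥ -(κ*(n:ℝ)*(N:ℝ)*W) := by
      nlinarith only [mul_nonneg (mul_nonneg (mul_nonneg hκ.le hn0) hNpos.le)
        (by linarith only [hW1] : (0:ℝ) ≤ W - 1)]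
    have e4 : -(d*(1+(n:ℝ))*(N:ℝ)) ≥ -(d*(1+(n:ℝ))*(N:ℝ)*W) := by
      nlinarith only [mul_nonneg (mul_nonneg (mul_nonneg hd.le
        (by linarith only [hn0] : (0:ℝ) ≤ 1+(n:ℝ)))
        hNpos.le) (by linarith only [hW1] : (0:ℝ) ≤ W - 1)]
    have hbW : b*(N:ℝ)*W = d*(n:ℝ)*(α+2)*(N:ℝ)*W + (n:ℝ)*(N:ℝ)*W + κ*(n:ℝ)*(N:ℝ)*W
        + d*(1+(n:ℝ))*(N:ℝ)*W + d*(α+2*(n:ℝ))*(N:ℝ)*W := by rw [hbe]; ring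
    linarith only [hu_lb, hh_lb, hκ_lb, hR_lb, hQ_lb, e1, e2, e3, e4, hbW]
  -- integrability
  have hupper : ∀ σv : Fin n → Fin N → ℝ, Real.exp (X σv) ≤
      Real.exp (a*N*W) * Real.exp (-(κ/2 * ∑ ℓ, ∑ i, (σv ℓ i)^2)) := by
    intro σv
    rw [← Real.exp_add]
    apply Real.exp_le_exp.mpr
    have h1 := F1 σv
    linarith only [h1]
  have hint_exp : Integrable (fun σv : Fin n → Fin N → ℝ => Real.exp (X σv)) := by
    apply Integrable.mono' ((integrable_gauss_pi n N (by positivity : (0:ℝ) < κ/2)).const_mul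
      (Real.exp (a*N*W)))
    · exact (Real.continuous_exp.comp hXcont).aestronglyMeasurable
    · refine ae_of_all _ (fun σv => ?_)
      rw [Real.norm_eq_abs, abs_of_pos (Real.exp_pos _)]
      exact hupper σv
  have hint_gauss4 : Integrable (fun σv : Fin n → Fin N → ℝ =>
      Real.exp (-(κ/4 * ∑ ℓ, ∑ i, (σv ℓ i)^2))) := integrable_gauss_pi n N (by positivity)
  have hint_gauss8 : Integrable (fun σv : Fin n → Fin N → ℝ =>
      Real.exp (-(κ/8 * ∑ ℓ, ∑ i, (σv ℓ i)^2))) := integrable_gauss_pi n N (by positivity)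
  have hint_num : Integrable (fun σv : Fin n → Fin N → ℝ =>
      (∑ ℓ, ∑ i, (σv ℓ i)^2)^k * Real.exp (X σv)) := by
    apply Integrable.mono' (hint_gauss4.const_mul
      (Real.exp (a*N*W) * ((Nat.factorial k : ℝ) * (1/(κ/4))^k)))
    · apply Continuous.aestronglyMeasurable
      have hc : Continuous (fun σv : Fin n → Fin N → ℝ => (∑ ℓ, ∑ i, (σv ℓ i)^2)^k) := by
        fun_prop
      exact hc.mul (Real.continuous_exp.comp hXcont)
    · refine ae_of_all _ (fun σv => ?_)
      have ht0 : (0:ℝ) ≤ ∑ ℓ, ∑ i, (σv ℓ i)^2 := by positivity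
      rw [Real.norm_eq_abs, abs_of_nonneg (by positivity)]
      have h1 : (∑ ℓ, ∑ i, (σv ℓ i)^2)^k
          ≤ (Nat.factorial k : ℝ) * (1/(κ/4))^k *
            Real.exp (κ/4 * ∑ ℓ, ∑ i, (σv ℓ i)^2) :=
        pow_le_exp_aux k (by positivity) ht0
      have hexpid : Real.exp (κ/4 * ∑ ℓ, ∑ i, (σv ℓ i)^2) *
          (Real.exp (a*N*W) * Real.exp (-(κ/2 * ∑ ℓ, ∑ i, (σv ℓ i)^2)))
          = Real.exp (a*N*W) * Real.exp (-(κ/4 * ∑ ℓ, ∑ i, (σv ℓ i)^2)) := by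
        rw [← Real.exp_add, ← Real.exp_add, ← Real.exp_add]
        congr 1; ring
      calc (∑ ℓ, ∑ i, (σv ℓ i)^2)^k * Real.exp (X σv)
          ≤ ((Nat.factorial k : ℝ) * (1/(κ/4))^k *
              Real.exp (κ/4 * ∑ ℓ, ∑ i, (σv ℓ i)^2)) *
            (Real.exp (a*N*W) * Real.exp (-(κ/2 * ∑ ℓ, ∑ i, (σv ℓ i)^2))) :=
            mul_le_mul h1 (hupper σv) (Real.exp_pos _).le (by positivity)
        _ = Real.exp (a*N*W) * ((Nat.factorial k : ℝ) * (1/(κ/4))^k) *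
            Real.exp (-(κ/4 * ∑ ℓ, ∑ i, (σv ℓ i)^2)) := by
            rw [mul_assoc ((Nat.factorial k : ℝ) * (1/(κ/4))^k), hexpid]; ring
  -- volume of the cube
  have hinner_vol : volume (Set.univ.pi fun _ : Fin N => Set.Icc (0:ℝ) 1) = 1 := by
    rw [volume_pi_pi]
    simp [Real.volume_Icc]
  have hvol : volume cube = 1 := by
    rw [hcubedef, volume_pi_pi]
    simp only [hinner_vol, Finset.prod_const, one_pow]
  have hZeq : Zgen u φ ψ h κ lam η G z = ∫ σv : Fin n → Fin N → ℝ, Real.exp (X σv) := rfl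
  have hZge : Real.exp (-(b*N*W)) ≤ Zgen u φ ψ h κ lam η G z := by
    have h1 : Real.exp (-(b*N*W)) * (volume cube).toReal
        ≤ ∫ σv in cube, Real.exp (X σv) :=
      setIntegral_ge_of_const_le_real hcube_meas (by rw [hvol]; exact ENNReal.one_ne_top)
        (fun x hx => Real.exp_le_exp.mpr (F2 x hx)) hint_exp.integrableOn
    have h2 : ∫ σv in cube, Real.exp (X σv) ≤ ∫ σv, Real.exp (X σv) :=
      setIntegral_le_integral hint_exp (ae_of_all _ (fun x => (Real.exp_pos _).le))
    rw [hvol] at h1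
    simp only [ENNReal.toReal_one, mul_one] at h1
    rw [hZeq]
    linarith only [h1, h2]
  have hZpos : 0 < Zgen u φ ψ h κ lam η G z := lt_of_lt_of_le (Real.exp_pos _) hZge
  -- rewrite the Gibbs average
  have hgibbs_eq : gibbsGen u φ ψ h κ lam η G z (fun σv => (cnorm σv) ^ (2*k)) =
      (∫ σv : Fin n → Fin N → ℝ, (∑ ℓ, ∑ i, (σv ℓ i)^2)^k * Real.exp (X σv)) /
        Zgen u φ ψ h κ lam η G z := by
    rw [gibbsGen]
    congr 1
    congr 1
    funext σv
    rw [cnorm, pow_mul, Real.sq_sqrt (by positivity)]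
  -- split the integral
  set sset : Set (Fin n → Fin N → ℝ) := {σv | (∑ ℓ, ∑ i, (σv ℓ i)^2) ≤ T} with hsdef
  have hs_meas : MeasurableSet sset := by
    apply measurableSet_le
    · fun_prop
    · exact measurable_const
  have h_in : ∫ σv in sset, (∑ ℓ, ∑ i, (σv ℓ i)^2)^k * Real.exp (X σv) ≤
      T^k * Zgen u φ ψ h κ lam η G z := by
    have hstep1 : ∫ σv in sset, (∑ ℓ, ∑ i, (σv ℓ i)^2)^k * Real.exp (X σv) ≤
        ∫ σv in sset, T^k * Real.exp (X σv) := by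
      apply setIntegral_mono_on hint_num.integrableOn
        ((hint_exp.const_mul (T^k)).integrableOn) hs_meas
      intro x hx
      have hxT : (∑ ℓ, ∑ i, (x ℓ i)^2) ≤ T := hx
      exact mul_le_mul_of_nonneg_right (pow_le_pow_left₀ (by positivity) hxT k)
        (Real.exp_pos _).le
    have hstep2 : ∫ σv in sset, T^k * Real.exp (X σv) = T^k * ∫ σv in sset, Real.exp (X σv) :=
      integral_const_mul _ _
    have hstep3 : ∫ σv in sset, Real.exp (X σv) ≤ Zgen u φ ψ h κ lam η G z := by
      rw [hZeq]
      exact setIntegral_le_integral hint_exp (ae_of_all _ (fun x => (Real.exp_pos _).le))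
    calc ∫ σv in sset, (∑ ℓ, ∑ i, (σv ℓ i)^2)^k * Real.exp (X σv)
        ≤ ∫ σv in sset, T^k * Real.exp (X σv) := hstep1
      _ = T^k * ∫ σv in sset, Real.exp (X σv) := hstep2
      _ ≤ T^k * Zgen u φ ψ h κ lam η G z :=
          mul_le_mul_of_nonneg_left hstep3 (pow_nonneg hT0 k)
  set Cout : ℝ := Real.exp (a*N*W - κ/4*T) * ((Nat.factorial k : ℝ) * (1/(κ/8))^k)
    with hCoutdef
  have hCout0 : 0 ≤ Cout := by positivity
  have h_out : ∫ σv in ssetᶜ, (∑ ℓ, ∑ i, (σv ℓ i)^2)^k * Real.exp (X σv) ≤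
      Cout * (Real.sqrt (π/(κ/8)))^(n*N) := by
    have hstep1 : ∫ σv in ssetᶜ, (∑ ℓ, ∑ i, (σv ℓ i)^2)^k * Real.exp (X σv) ≤
        ∫ σv in ssetᶜ, Cout * Real.exp (-(κ/8 * ∑ ℓ, ∑ i, (σv ℓ i)^2)) := by
      apply setIntegral_mono_on hint_num.integrableOn
        ((hint_gauss8.const_mul Cout).integrableOn) hs_meas.compl
      intro x hx
      have hxT : T < ∑ ℓ, ∑ i, (x ℓ i)^2 := by
        have hxx : ¬ ((∑ ℓ, ∑ i, (x ℓ i)^2) ≤ T) := hx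
        exact lt_of_not_ge hxx
      have ht0 : (0:ℝ) ≤ ∑ ℓ, ∑ i, (x ℓ i)^2 := by positivity
      have h1 : (∑ ℓ, ∑ i, (x ℓ i)^2)^k
          ≤ (Nat.factorial k : ℝ) * (1/(κ/8))^k *
            Real.exp (κ/8 * ∑ ℓ, ∑ i, (x ℓ i)^2) :=
        pow_le_exp_aux k (by positivity) ht0
      have hexpid : Real.exp (κ/8 * ∑ ℓ, ∑ i, (x ℓ i)^2) *
          (Real.exp (a*N*W) * Real.exp (-(κ/2 * ∑ ℓ, ∑ i, (x ℓ i)^2)))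
          = Real.exp (a*N*W - 3*κ/8 * ∑ ℓ, ∑ i, (x ℓ i)^2) := by
        rw [← Real.exp_add, ← Real.exp_add]
        congr 1; ring
      calc (∑ ℓ, ∑ i, (x ℓ i)^2)^k * Real.exp (X x)
          ≤ ((Nat.factorial k : ℝ) * (1/(κ/8))^k *
              Real.exp (κ/8 * ∑ ℓ, ∑ i, (x ℓ i)^2)) *
            (Real.exp (a*N*W) * Real.exp (-(κ/2 * ∑ ℓ, ∑ i, (x ℓ i)^2))) :=
            mul_le_mul h1 (hupper x) (Real.exp_pos _).le (by positivity)
        _ = ((Nat.factorial k : ℝ) * (1/(κ/8))^k) *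
            Real.exp (a*N*W - 3*κ/8 * ∑ ℓ, ∑ i, (x ℓ i)^2) := by
            rw [mul_assoc ((Nat.factorial k : ℝ) * (1/(κ/8))^k), hexpid]
        _ ≤ ((Nat.factorial k : ℝ) * (1/(κ/8))^k) *
            Real.exp ((a*N*W - κ/4*T) + (-(κ/8 * ∑ ℓ, ∑ i, (x ℓ i)^2))) := by
            apply mul_le_mul_of_nonneg_left _ (by positivity)
            apply Real.exp_le_exp.mpr
            have h2 : κ/4*T ≤ κ/4 * ∑ ℓ, ∑ i, (x ℓ i)^2 :=
              mul_le_mul_of_nonneg_left hxT.le (by positivity)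
            linarith only [h2]
        _ = Cout * Real.exp (-(κ/8 * ∑ ℓ, ∑ i, (x ℓ i)^2)) := by
            rw [hCoutdef, Real.exp_add]
            ring
    have hstep2 : ∫ σv in ssetᶜ, Cout * Real.exp (-(κ/8 * ∑ ℓ, ∑ i, (σv ℓ i)^2)) ≤
        ∫ σv : Fin n → Fin N → ℝ, Cout * Real.exp (-(κ/8 * ∑ ℓ, ∑ i, (σv ℓ i)^2)) :=
      setIntegral_le_integral (hint_gauss8.const_mul Cout)
        (ae_of_all _ (fun x => by positivity))
    have hstep3 : ∫ σv : Fin n → Fin N → ℝ, Cout * Real.exp (-(κ/8 * ∑ ℓ, ∑ i, (σv ℓ i)^2))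
        = Cout * (Real.sqrt (π/(κ/8)))^(n*N) := by
      rw [integral_const_mul, integral_gauss_pi n N (by positivity : (0:ℝ) < κ/8)]
    calc ∫ σv in ssetᶜ, (∑ ℓ, ∑ i, (σv ℓ i)^2)^k * Real.exp (X σv)
        ≤ ∫ σv in ssetᶜ, Cout * Real.exp (-(κ/8 * ∑ ℓ, ∑ i, (σv ℓ i)^2)) := hstep1
      _ ≤ ∫ σv : Fin n → Fin N → ℝ, Cout * Real.exp (-(κ/8 * ∑ ℓ, ∑ i, (σv ℓ i)^2)) := hstep2
      _ = Cout * (Real.sqrt (π/(κ/8)))^(n*N) := hstep3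
  -- tail comparison
  set C7 : ℝ := (Nat.factorial k : ℝ) * (1/(κ/8))^k with hC7def
  have hC70 : 0 ≤ C7 := by positivity
  have htail : Cout * (Real.sqrt (π/(κ/8)))^(n*N) ≤ C7 * Zgen u φ ψ h κ lam η G z := by
    have hp1 : (Real.sqrt (π/(κ/8)))^(n*N) ≤ (c6C κ)^(n*N) :=
      pow_le_pow_left₀ (Real.sqrt_nonneg _) (le_max_right _ _) _
    have hp2 : (c6C κ)^(n*N) = Real.exp (((n*N : ℕ) : ℝ) * Real.log (c6C κ)) := by
      have h0 : Real.exp (((n*N : ℕ) : ℝ) * Real.log (c6C κ))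
          = (Real.exp (Real.log (c6C κ)))^(n*N) := Real.exp_nat_mul _ _
      rw [h0, Real.exp_log hc6pos]
    have hexp1 : Real.exp (a*N*W - κ/4*T) * Real.exp (((n*N : ℕ) : ℝ) * Real.log (c6C κ))
        ≤ Real.exp (-(b*N*W)) := by
      rw [← Real.exp_add]
      apply Real.exp_le_exp.mpr
      have hTexp : κ/4*T = (a + b + n*Real.log (c6C κ) + 1) * ((N:ℝ)*W) := by
        rw [hTdef, hcdef, cC, ← hadef, ← hbdef]; field_simp
      have hcast : ((n*N : ℕ) : ℝ) = (n:ℝ)*(N:ℝ) := by push_cast; ring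
      rw [hcast, hTexp]
      have hint1 : 0 ≤ (n:ℝ)*(N:ℝ)*Real.log (c6C κ)*(W-1) :=
        mul_nonneg (mul_nonneg (mul_nonneg hn0 hNpos.le) hlog0)
          (by linarith only [hW1] : (0:ℝ) ≤ W - 1)
      have hint2 : 0 < (N:ℝ)*W := mul_pos hNpos hW0
      clear_value a b W
      nlinarith only [hint1, hint2]
    calc Cout * (Real.sqrt (π/(κ/8)))^(n*N)
        ≤ Cout * (c6C κ)^(n*N) := mul_le_mul_of_nonneg_left hp1 hCout0
      _ = C7 * (Real.exp (a*N*W - κ/4*T) * Real.exp (((n*N:ℕ) : ℝ) * Real.log (c6C κ))) := by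
          rw [hp2, hCoutdef, hC7def]; ring
      _ ≤ C7 * Real.exp (-(b*N*W)) := mul_le_mul_of_nonneg_left hexp1 hC70
      _ ≤ C7 * Zgen u φ ψ h κ lam η G z := mul_le_mul_of_nonneg_left hZge hC70
  -- numerator bound
  have hsplit : (∫ σv : Fin n → Fin N → ℝ, (∑ ℓ, ∑ i, (σv ℓ i)^2)^k * Real.exp (X σv))
      = (∫ σv in sset, (∑ ℓ, ∑ i, (σv ℓ i)^2)^k * Real.exp (X σv))
        + (∫ σv in ssetᶜ, (∑ ℓ, ∑ i, (σv ℓ i)^2)^k * Real.exp (X σv)) :=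
    (integral_add_compl hs_meas hint_num).symm
  have hNum : (∫ σv : Fin n → Fin N → ℝ, (∑ ℓ, ∑ i, (σv ℓ i)^2)^k * Real.exp (X σv))
      ≤ (T^k + C7) * Zgen u φ ψ h κ lam η G z := by
    rw [hsplit]
    have h1 := add_le_add h_in (le_trans h_out htail)
    linarith only [h1]
  -- final arithmetic
  rw [hgibbs_eq, div_le_iff₀ hZpos]
  have hWk : W^k ≤ 4^k * (Zs^k + (Gop^2)^k + 1^k + (h^2)^k) := by
    have h1 := pow_sum_four_le hZs0 (sq_nonneg Gop) (by norm_num : (0:ℝ) ≤ 1) (sq_nonneg h) k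
    rw [hWdef]
    exact h1
  have hTk : T^k = c^k * (N:ℝ)^k * W^k := by
    rw [hTdef, mul_pow, mul_pow]
  have hGk : 0 ≤ Gop^(2*k) := by rw [pow_mul]; exact pow_nonneg (sq_nonneg Gop) k
  have hhk : 0 ≤ h^(2*k) := by rw [pow_mul]; exact pow_nonneg (sq_nonneg h) k
  have hRHS1 : 1 ≤ Zs^k + Gop^(2*k) + 1 + h^(2*k) := by
    have h1 := pow_nonneg hZs0 k
    linarith only [h1, hGk, hhk]
  have hKC : KC n α κ h d k = 4^k * c^k + C7 + 1 := by
    rw [KC, ← hcdef, hC7def]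
  have h1 : T^k ≤ c^k * (N:ℝ)^k * (4^k * (Zs^k + Gop^(2*k) + 1 + h^(2*k))) := by
    rw [hTk]
    apply mul_le_mul_of_nonneg_left _ (by positivity)
    calc W^k ≤ 4^k * (Zs^k + (Gop^2)^k + 1^k + (h^2)^k) := hWk
      _ = 4^k * (Zs^k + Gop^(2*k) + 1 + h^(2*k)) := by
          rw [← pow_mul, ← pow_mul, one_pow]
  have h2 : C7 ≤ C7 * ((N:ℝ)^k * (Zs^k + Gop^(2*k) + 1 + h^(2*k))) := by
    apply le_mul_of_one_le_right hC70
    have hNk : 1 ≤ (N:ℝ)^k := one_le_pow₀ hNR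
    nlinarith only [hNk, hRHS1]
  have h3 : 0 ≤ (N:ℝ)^k * (Zs^k + Gop^(2*k) + 1 + h^(2*k)) :=
    mul_nonneg (pow_nonneg hNpos.le k) (by linarith only [hRHS1])
  have h4 : T^k + C7 ≤ KC n α κ h d k * (N:ℝ)^k * (Zs^k + Gop^(2*k) + 1 + h^(2*k)) := by
    rw [hKC]
    clear_value T C7 c Zs Gop W
    nlinarith only [h1, h2, h3]
  calc (∫ σv : Fin n → Fin N → ℝ, (∑ ℓ, ∑ i, (σv ℓ i)^2)^k * Real.exp (X σv))
      ≤ (T^k + C7) * Zgen u φ ψ h κ lam η G z := hNum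
    _ ≤ KC n α κ h d k * (N:ℝ)^k * (Zs^k + Gop^(2*k) + 1 + h^(2*k))
        * Zgen u φ ψ h κ lam η G z := mul_le_mul_of_nonneg_right h4 hZpos.le

/-- Lemma 4.4: for `k ≥ 1` there are `0 < ε < 1` and `K ≥ 1`
such that, a.s. in `(G,z)`, for `|λ|, |η| ≤ ε`,
`⟨‖σ⃗‖^{2k}⟩_{λ,η} ≤ K N^k (‖z̄‖^{2k} + ‖Ḡ‖_op^{2k} + 1 + h^{2k})`. -/
theorem gibbs_norm_moment_bound
    (n : ℕ) (hn : 1 ≤ n) (α κ h Δs d η0 : ℝ)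
    (hα : 0 < α) (hκ : 0 < κ) (hΔs : 0 ≤ Δs) (hd : 0 < d) (hη0 : 0 < η0)
    (u : ℝ → ℝ) (hdiff : Differentiable ℝ u)
    (φ ψ : (Fin n → ℝ) → ℝ) (hG : Growth n u φ ψ d η0 α)
    (k : ℕ) (hk : 1 ≤ k) :
    ∃ ε, 0 < ε ∧ ε < 1 ∧ ∃ K ≥ (1 : ℝ), ∀ N : ℕ,
      ∀ᵐ gz ∂(disorder ⌊α * (N : ℝ)⌋₊ N Δs),
        ∀ lam η : ℝ, |lam| ≤ ε → |η| ≤ ε →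
          gibbsGen u φ ψ h κ lam η gz.1 gz.2 (fun σv => (cnorm σv) ^ (2 * k)) ≤
            K * (N : ℝ) ^ k * ((Real.sqrt (∑ j, (gz.2 j / Real.sqrt (N : ℝ)) ^ 2)) ^ (2 * k) +
              (opNorm (fun p i => gz.1 p i / Real.sqrt (N : ℝ))) ^ (2 * k) + 1 + h ^ (2 * k)) := by
  refine ⟨min η0 (min (κ/(4*d)) (1/2)), lt_min hη0 (lt_min (by positivity) (by norm_num)),
    lt_of_le_of_lt (le_trans (min_le_right _ _) (min_le_right _ _)) (by norm_num),
    max 1 (KC n α κ h d k), le_max_left _ _, ?_⟩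
  intro N
  apply ae_of_all
  intro gz lam η hlam hη
  by_cases hN : 1 ≤ N
  · have hM : ((⌊α * (N:ℝ)⌋₊ : ℕ) : ℝ) ≤ α * N := Nat.floor_le (by positivity)
    have hkey := key n N ⌊α*(N:ℝ)⌋₊ hN α κ h d η0 hα hκ hd hη0 hM u hdiff φ ψ hG k hk
      gz.1 gz.2 lam η hlam hη
    refine le_trans hkey ?_
    have hZs0 : (0:ℝ) ≤ ∑ j, (gz.2 j / Real.sqrt (N:ℝ))^2 := by positivity
    rw [pow_mul (Real.sqrt (∑ j, (gz.2 j / Real.sqrt (N:ℝ))^2)) 2 k,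
      Real.sq_sqrt hZs0]
    apply mul_le_mul_of_nonneg_right _ ?_
    · exact mul_le_mul_of_nonneg_right (le_max_right 1 (KC n α κ h d k))
        (pow_nonneg (Nat.cast_nonneg N) k)
    · have h1 : 0 ≤ (opNorm (fun p i => gz.1 p i / Real.sqrt (N:ℝ)))^(2*k) := by
        rw [pow_mul]; exact pow_nonneg (sq_nonneg _) k
      have h2 : 0 ≤ h^(2*k) := by rw [pow_mul]; exact pow_nonneg (sq_nonneg h) k
      have h3 : 0 ≤ (∑ j, (gz.2 j / Real.sqrt (N:ℝ))^2)^k := pow_nonneg hZs0 k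
      linarith only [h1, h2, h3]
  · have hN0 : N = 0 := by omega
    subst hN0
    rw [gibbsGen]
    have heq : ∀ σv : Fin n → Fin 0 → ℝ, (cnorm σv)^(2*k) = 0 := by
      intro σv; rw [cnorm]
      simp only [Finset.univ_eq_empty, Finset.sum_empty, Finset.sum_const_zero, Real.sqrt_zero]
      exact zero_pow (by omega)
    have hnum : (∫ σv : Fin n → Fin 0 → ℝ,
        (cnorm σv)^(2*k) * Real.exp (Xgen u φ ψ h κ lam η gz.1 gz.2 σv)) = 0 := by
      simp only [heq, zero_mul, integral_zero]
    rw [hnum, zero_div]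
    have hzero : ((0:ℕ):ℝ)^k = 0 := by
      rw [Nat.cast_zero]; exact zero_pow (by omega)
    rw [hzero]
    simp


end
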